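/- arXiv:1606.01856 — 5 statements merged into one kernel-verified Lean document; each statement's English description precedes it below -/
import Mathlib

section
/- Let G be a generator with dimensions w_G, h_G and stages (X_i)_{i≥1}. Then for every i ≥ 1 and any two distinct points (a,b), (a′,b′) ∈ G, the translated copies X_i + (w_G^i·a, h_G^i·b) and X_i + (w_G^i·a′, h_G^i·b′) are disjoint. -/
/-- Two lattice points are adjacent iff they are at Euclidean distance 1
(i.e. they differ by exactly 1 in exactly one coordinate). -/
def adjPt (p q : ℕ × ℕ) : Prop :=
  (p.1 = q.1 ∧ (p.2 + 1 = q.2 ∨ q.2 + 1 = p.2)) ∨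
  (p.2 = q.2 ∧ (p.1 + 1 = q.1 ∨ q.1 + 1 = p.1))

/-- The graph with vertex set `S` and an edge between any two points at
Euclidean distance 1. -/
def gridGraph (S : Set (ℕ × ℕ)) : SimpleGraph S where
  Adj p q := adjPt p.1 q.1
  symm := by
    constructor
    rintro ⟨p, hp⟩ ⟨q, hq⟩ (⟨h1, h2⟩ | ⟨h1, h2⟩)
    · exact Or.inl ⟨h1.symm, h2.symm⟩
    · exact Or.inr ⟨h1.symm, h2.symm⟩
  loopless := by
    constructor
    rintro ⟨p, hp⟩ (⟨_, h | h⟩ | ⟨_, h | h⟩) <;> omega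

/-- A set `S ⊆ ℕ²` is connected if its grid graph is connected. -/
def IsConnectedSet (S : Set (ℕ × ℕ)) : Prop := (gridGraph S).Connected

/-- `wG G = max{x | (x,y) ∈ G} + 1`. -/
noncomputable def wG (G : Set (ℕ × ℕ)) : ℕ := sSup ((fun p => p.1) '' G) + 1

/-- `hG G = max{y | (x,y) ∈ G} + 1`. -/
noncomputable def hG (G : Set (ℕ × ℕ)) : ℕ := sSup ((fun p => p.2) '' G) + 1

/-- The rectangle `{0,…,w−1} × {0,…,h−1}`. -/
def gridBox (w h : ℕ) : Set (ℕ × ℕ) := {p | p.1 < w ∧ p.2 < h}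

/-- `G` is a generator of a discrete self-similar fractal. -/
structure IsGenerator (G : Set (ℕ × ℕ)) : Prop where
  finite : G.Finite
  zero_mem : (0, 0) ∈ G
  connected : IsConnectedSet G
  one_lt_w : 1 < wG G
  one_lt_h : 1 < hG G
  ssubset_box : G ⊂ gridBox (wG G) (hG G)

/-- The stages of the discrete self-similar fractal generated by `G`:
`X_1 = G` and `X_{i+1} = X_i + (wG^i, hG^i)·G`.  (`stage G 0` is unused.) -/
noncomputable def stage (G : Set (ℕ × ℕ)) : ℕ → Set (ℕ × ℕ)
  | 0 => ∅
  | 1 => G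
  | (i + 2) => {p | ∃ a ∈ stage G (i + 1), ∃ b ∈ G,
      p = (a.1 + wG G ^ (i + 1) * b.1, a.2 + hG G ^ (i + 1) * b.2)}

/-- The discrete self-similar fractal `F = ⋃_{i ≥ 1} X_i` generated by `G`. -/
noncomputable def fractal (G : Set (ℕ × ℕ)) : Set (ℕ × ℕ) := ⋃ i : ℕ, stage G (i + 1)

/-- The generator of the Sierpinski triangle: `{(0,0),(1,0),(0,1)}`. -/
def sierpGen : Set (ℕ × ℕ) := {(0, 0), (1, 0), (0, 1)}


lemma stage_subset_box (G : Set (ℕ × ℕ)) (hGen : IsGenerator G) :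
    ∀ i : ℕ, 1 ≤ i → stage G i ⊆ gridBox (wG G ^ i) (hG G ^ i) := by
  intro i
  induction i with
  | zero => omega
  | succ n ih =>
    intro _
    match n, ih with
    | 0, _ =>
      simpa [stage, pow_one] using hGen.ssubset_box.subset
    | (m + 1), ih =>
      rintro p ⟨a, ha, b, hb, rfl⟩
      have h1 := ih (by omega) ha
      have h2 := hGen.ssubset_box.subset hb
      obtain ⟨ha1, ha2⟩ := h1
      obtain ⟨hb1, hb2⟩ := h2
      constructor
      · show a.1 + wG G ^ (m + 1) * b.1 < wG G ^ (m + 2)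
        have : wG G ^ (m + 1) * b.1 + wG G ^ (m + 1) ≤ wG G ^ (m + 2) := by
          have e : wG G ^ (m + 2) = wG G ^ (m + 1) * wG G := pow_succ _ _
          nlinarith [pow_pos (by omega : 0 < wG G) (m + 1)]
        omega
      · show a.2 + hG G ^ (m + 1) * b.2 < hG G ^ (m + 2)
        have : hG G ^ (m + 1) * b.2 + hG G ^ (m + 1) ≤ hG G ^ (m + 2) := by
          have e : hG G ^ (m + 2) = hG G ^ (m + 1) * hG G := pow_succ _ _
          nlinarith [pow_pos (by omega : 0 < hG G) (m + 1)]
        omega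

/-- for every `i ≥ 1` and distinct `(a,b), (a',b') ∈ G`, the
translated copies `X_i + (wG^i·a, hG^i·b)` and `X_i + (wG^i·a', hG^i·b')`
are disjoint. -/
theorem stage_translates_disjoint (G : Set (ℕ × ℕ)) (hGen : IsGenerator G) :
    ∀ i : ℕ, 1 ≤ i → ∀ a b a' b' : ℕ, (a, b) ∈ G → (a', b') ∈ G →
      (a, b) ≠ (a', b') →
      Disjoint
        ((fun p : ℕ × ℕ => (p.1 + wG G ^ i * a, p.2 + hG G ^ i * b)) '' stage G i)
        ((fun p : ℕ × ℕ => (p.1 + wG G ^ i * a', p.2 + hG G ^ i * b')) '' stage G i) := by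
  intro i hi a b a' b' ha hb hne
  rw [Set.disjoint_left]
  rintro z ⟨p, hp, rfl⟩ ⟨q, hq, hqe⟩
  have hp' := stage_subset_box G hGen i hi hp
  have hq' := stage_subset_box G hGen i hi hq
  obtain ⟨hp1, hp2⟩ := hp'
  obtain ⟨hq1, hq2⟩ := hq'
  simp only [Prod.mk.injEq] at hqe
  obtain ⟨hx, hy⟩ := hqe
  have haa : a = a' := by
    rcases Nat.lt_trichotomy a a' with h | h | h
    · nlinarith
    · exact h
    · nlinarith
  have hbb : b = b' := by
    rcases Nat.lt_trichotomy b b' with h | h | h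
    · nlinarith
    · exact h
    · nlinarith
  exact hne (by rw [haa, hbb])
end

section
/- Let G be a generator with dimensions w_G, h_G and fractal F = ⋃_{i≥1} X_i. Then F has arbitrarily large rectangular holes: for every i ≥ 1 there exists (u,v) ∈ ℕ² such that the rectangle {u,…,u+w_G^i−1} × {v,…,v+h_G^i−1} is disjoint from F. -/
lemma box_mem_aux {G : Set (ℕ × ℕ)} (hGen : IsGenerator G) {p : ℕ × ℕ} (hp : p ∈ G) :
    p.1 < wG G ∧ p.2 < hG G := hGen.ssubset_box.1 hp

lemma stage_bound {G : Set (ℕ × ℕ)} (hGen : IsGenerator G) :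
    ∀ j, ∀ p ∈ stage G (j + 1), p.1 < wG G ^ (j + 1) ∧ p.2 < hG G ^ (j + 1) := by
  intro j
  induction j with
  | zero =>
    intro p hp
    simpa [stage, pow_one] using box_mem_aux hGen hp
  | succ n ih =>
    rintro p ⟨a, ha, b, hb, rfl⟩
    obtain ⟨h1, h2⟩ := ih a ha
    obtain ⟨h3, h4⟩ := box_mem_aux hGen hb
    have hw1 := Nat.mul_le_mul_left (wG G ^ (n + 1)) (show b.1 + 1 ≤ wG G from h3)
    have hh1 := Nat.mul_le_mul_left (hG G ^ (n + 1)) (show b.2 + 1 ≤ hG G from h4)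
    rw [Nat.mul_add, Nat.mul_one] at hw1 hh1
    constructor
    · show a.1 + wG G ^ (n + 1) * b.1 < wG G ^ (n + 2)
      have : wG G ^ (n + 2) = wG G ^ (n + 1) * wG G := by ring
      omega
    · show a.2 + hG G ^ (n + 1) * b.2 < hG G ^ (n + 2)
      have : hG G ^ (n + 2) = hG G ^ (n + 1) * hG G := by ring
      omega

lemma stage_digit {G : Set (ℕ × ℕ)} (hGen : IsGenerator G) :
    ∀ j, ∀ p ∈ stage G (j + 1), ∀ k,
      (p.1 / wG G ^ k % wG G, p.2 / hG G ^ k % hG G) ∈ G := by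
  have hw : 1 < wG G := hGen.one_lt_w
  have hh : 1 < hG G := hGen.one_lt_h
  intro j
  induction j with
  | zero =>
    intro p hp k
    obtain ⟨h1, h2⟩ := box_mem_aux hGen (show p ∈ G from hp)
    match k with
    | 0 =>
      simp only [pow_zero, Nat.div_one, Nat.mod_eq_of_lt h1, Nat.mod_eq_of_lt h2]
      exact hp
    | (k + 1) =>
      have hx : p.1 / wG G ^ (k + 1) = 0 :=
        Nat.div_eq_of_lt (lt_of_lt_of_le h1 (Nat.le_self_pow (Nat.succ_ne_zero k) _))
      have hy : p.2 / hG G ^ (k + 1) = 0 :=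
        Nat.div_eq_of_lt (lt_of_lt_of_le h2 (Nat.le_self_pow (Nat.succ_ne_zero k) _))
      rw [hx, hy]
      simpa using hGen.zero_mem
  | succ n ih =>
    rintro p ⟨a, ha, b, hb, rfl⟩ k
    obtain ⟨ha1, ha2⟩ := stage_bound hGen n a ha
    obtain ⟨hb1, hb2⟩ := box_mem_aux hGen hb
    rcases le_or_gt k n with hk | hk
    · -- k ≤ n : digit comes from a
      have ew : wG G ^ (n + 1) = wG G ^ k * (wG G * wG G ^ (n - k)) := by
        rw [← pow_succ']
        rw [← pow_add]
        congr 1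
        omega
      have eh : hG G ^ (n + 1) = hG G ^ k * (hG G * hG G ^ (n - k)) := by
        rw [← pow_succ']
        rw [← pow_add]
        congr 1
        omega
      have hx : (a.1 + wG G ^ (n + 1) * b.1) / wG G ^ k % wG G
          = a.1 / wG G ^ k % wG G := by
        rw [ew, mul_assoc, Nat.add_mul_div_left _ _ (pow_pos (by omega) k),
          mul_assoc (wG G), Nat.add_mul_mod_self_left]
      have hy : (a.2 + hG G ^ (n + 1) * b.2) / hG G ^ k % hG G
          = a.2 / hG G ^ k % hG G := by
        rw [eh, mul_assoc, Nat.add_mul_div_left _ _ (pow_pos (by omega) k),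
          mul_assoc (hG G), Nat.add_mul_mod_self_left]
      rw [hx, hy]
      exact ih a ha k
    · -- k ≥ n + 1 : digit comes from b (or zero)
      have hx : (a.1 + wG G ^ (n + 1) * b.1) / wG G ^ k = b.1 / wG G ^ (k - (n + 1)) := by
        have : wG G ^ k = wG G ^ (n + 1) * wG G ^ (k - (n + 1)) := by
          rw [← pow_add]; congr 1; omega
        rw [this, ← Nat.div_div_eq_div_mul,
          Nat.add_mul_div_left _ _ (pow_pos (by omega) _),
          Nat.div_eq_of_lt ha1, Nat.zero_add]
      have hy : (a.2 + hG G ^ (n + 1) * b.2) / hG G ^ k = b.2 / hG G ^ (k - (n + 1)) := by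
        have : hG G ^ k = hG G ^ (n + 1) * hG G ^ (k - (n + 1)) := by
          rw [← pow_add]; congr 1; omega
        rw [this, ← Nat.div_div_eq_div_mul,
          Nat.add_mul_div_left _ _ (pow_pos (by omega) _),
          Nat.div_eq_of_lt ha2, Nat.zero_add]
      rw [hx, hy]
      rcases Nat.eq_or_lt_of_le hk with heq | hlt
      · rw [← heq]
        simp only [Nat.sub_self, pow_zero, Nat.div_one,
          Nat.mod_eq_of_lt hb1, Nat.mod_eq_of_lt hb2]
        exact hb
      · have hkn : k - (n + 1) ≠ 0 := by omega
        rw [Nat.div_eq_of_lt (lt_of_lt_of_le hb1 (Nat.le_self_pow hkn _)),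
          Nat.div_eq_of_lt (lt_of_lt_of_le hb2 (Nat.le_self_pow hkn _))]
        simpa using hGen.zero_mem

/-- `F` has arbitrarily large rectangular holes: for every
`i ≥ 1` there is `(u,v)` with `{u,…,u+wG^i−1} × {v,…,v+hG^i−1}` disjoint
from `F`. -/
theorem fractal_has_large_holes (G : Set (ℕ × ℕ)) (hGen : IsGenerator G) :
    ∀ i : ℕ, 1 ≤ i → ∃ u v : ℕ,
      Disjoint
        ({p : ℕ × ℕ | u ≤ p.1 ∧ p.1 < u + wG G ^ i ∧ v ≤ p.2 ∧ p.2 < v + hG G ^ i})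
        (fractal G) := by
  intro i _
  obtain ⟨q, hqbox, hqG⟩ := Set.exists_of_ssubset hGen.ssubset_box
  obtain ⟨hq1, hq2⟩ : q.1 < wG G ∧ q.2 < hG G := hqbox
  refine ⟨q.1 * wG G ^ i, q.2 * hG G ^ i, Set.disjoint_left.2 ?_⟩
  rintro ⟨x, y⟩ ⟨h1, h2, h3, h4⟩ hpF
  obtain ⟨_, ⟨j, rfl⟩, hst⟩ := hpF
  have hdig := stage_digit hGen j _ hst i
  have hwpos : 0 < wG G ^ i := pow_pos (by have := hGen.one_lt_w; omega) _
  have hhpos : 0 < hG G ^ i := pow_pos (by have := hGen.one_lt_h; omega) _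
  have hx : x / wG G ^ i = q.1 := by
    apply Nat.div_eq_of_lt_le
    · simpa [Nat.mul_comm] using h1
    · calc x < q.1 * wG G ^ i + wG G ^ i := h2
        _ = (q.1 + 1) * wG G ^ i := by ring
  have hy : y / hG G ^ i = q.2 := by
    apply Nat.div_eq_of_lt_le
    · simpa [Nat.mul_comm] using h3
    · calc y < q.2 * hG G ^ i + hG G ^ i := h4
        _ = (q.2 + 1) * hG G ^ i := by ring
  rw [hx, hy, Nat.mod_eq_of_lt hq1, Nat.mod_eq_of_lt hq2] at hdig
  exact hqG hdig
end

section
/- Let G be a generator with dimensions w_G, h_G and stages (X_i)_{i≥1}, and suppose the second stage X_2 is connected. Then there exists x ∈ ℕ such that both (x,0) ∈ G and (x,h_G−1) ∈ G; that is, the bottom row and the top row of G occupy a common column, so that a vertical connection point between two vertically adjacent copies exists. -/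
lemma crossing_edge {S : Set (ℕ × ℕ)} {h : ℕ} :
    ∀ {u v : S}, (gridGraph S).Walk u v → u.1.2 < h → h ≤ v.1.2 →
    ∃ p q : S, (gridGraph S).Adj p q ∧ p.1.2 < h ∧ h ≤ q.1.2 := by
  intro u v w
  induction w with
  | nil => intro h1 h2; omega
  | cons adj _ ih =>
    rename_i u' m v' _
    intro h1 h2
    by_cases hm : m.1.2 < h
    · exact ih hm h2
    · exact ⟨u', m, adj, h1, by omega⟩

lemma mem_lt_w {G : Set (ℕ × ℕ)} (hf : G.Finite) {a : ℕ × ℕ} (ha : a ∈ G) :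
    a.1 < wG G := by
  have : a.1 ≤ sSup ((fun p => p.1) '' G) :=
    le_csSup ((hf.image _).bddAbove) ⟨a, ha, rfl⟩
  unfold wG; omega

lemma mem_lt_h {G : Set (ℕ × ℕ)} (hf : G.Finite) {a : ℕ × ℕ} (ha : a ∈ G) :
    a.2 < hG G := by
  have : a.2 ≤ sSup ((fun p => p.2) '' G) :=
    le_csSup ((hf.image _).bddAbove) ⟨a, ha, rfl⟩
  unfold hG; omega

/-- if stage 2 is connected then the bottom and top rows of
`G` occupy a common column. -/
theorem vertical_connection_point (G : Set (ℕ × ℕ)) (hGen : IsGenerator G)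
    (hconn : IsConnectedSet (stage G 2)) :
    ∃ x : ℕ, (x, 0) ∈ G ∧ (x, hG G - 1) ∈ G := by
  set w := wG G with hw
  set h := hG G with hh
  have hfin := hGen.finite
  have h1h : 1 < h := hGen.one_lt_h
  have h1w : 1 < w := hGen.one_lt_w
  -- membership characterization of stage 2
  have stage2_mem : ∀ p : ℕ × ℕ, p ∈ stage G 2 ↔
      ∃ a ∈ G, ∃ b ∈ G, p = (a.1 + w * b.1, a.2 + h * b.2) := by
    intro p
    show p ∈ stage G (0 + 2) ↔ _
    show (∃ a ∈ G, ∃ b ∈ G, p = (a.1 + wG G ^ (0+1) * b.1, a.2 + hG G ^ (0+1) * b.2)) ↔ _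
    simp [pow_one, ← hw, ← hh]
  -- a top point of G
  have htop : ∃ b ∈ G, b.2 = h - 1 := by
    have hne : ((fun p : ℕ × ℕ => p.2) '' G).Nonempty := ⟨0, (0,0), hGen.zero_mem, rfl⟩
    have := Set.Nonempty.csSup_mem hne (hfin.image _)
    obtain ⟨b, hb, hb2⟩ := this
    refine ⟨b, hb, ?_⟩
    have : b.2 = sSup ((fun p : ℕ × ℕ => p.2) '' G) := hb2
    rw [this]; unfold h; unfold hG; omega
  obtain ⟨b, hbG, hb2⟩ := htop
  -- two points of stage 2 on different sides of the line y = h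
  have hp0 : ((0 : ℕ), (0 : ℕ)) ∈ stage G 2 := by
    rw [stage2_mem]
    exact ⟨(0,0), hGen.zero_mem, (0,0), hGen.zero_mem, by simp⟩
  have hp1 : ((w * b.1 : ℕ), (h * b.2 : ℕ)) ∈ stage G 2 := by
    rw [stage2_mem]
    exact ⟨(0,0), hGen.zero_mem, b, hbG, by simp⟩
  have hy1 : h ≤ h * b.2 := by
    have : 1 ≤ b.2 := by omega
    nlinarith
  obtain ⟨walk⟩ := hconn.preconnected ⟨_, hp0⟩ ⟨_, hp1⟩
  obtain ⟨p, q, hadj, hp, hq⟩ := crossing_edge walk (show (0:ℕ) < h by omega) hy1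
  -- the crossing edge is vertical at y = h-1 / h
  have hcross : p.1.1 = q.1.1 ∧ p.1.2 = h - 1 ∧ q.1.2 = h := by
    rcases hadj with ⟨h1, h2 | h2⟩ | ⟨h1, h2⟩
    · exact ⟨h1, by omega, by omega⟩
    · omega
    · omega
  obtain ⟨hx, hyp, hyq⟩ := hcross
  -- decompose p and q
  obtain ⟨a, haG, c, hcG, hpe⟩ := (stage2_mem p.1).mp p.2
  obtain ⟨a', ha'G, c', hc'G, hqe⟩ := (stage2_mem q.1).mp q.2
  have ha2 := mem_lt_h hfin haG
  have ha'2 := mem_lt_h hfin ha'G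
  have ha1 := mem_lt_w hfin haG
  have ha'1 := mem_lt_w hfin ha'G
  have hp1e : p.1.1 = a.1 + w * c.1 := by rw [hpe]
  have hp2e : p.1.2 = a.2 + h * c.2 := by rw [hpe]
  have hq1e : q.1.1 = a'.1 + w * c'.1 := by rw [hqe]
  have hq2e : q.1.2 = a'.2 + h * c'.2 := by rw [hqe]
  -- from y-coordinates: c.2 = 0, a.2 = h-1, c'.2 = 1, a'.2 = 0
  have hsum1 : a.2 + h * c.2 = h - 1 := by rw [← hp2e]; exact hyp
  have hsum2 : a'.2 + h * c'.2 = h := by rw [← hq2e]; exact hyq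
  have hc2 : c.2 = 0 := by
    by_contra hne0
    have : h ≤ h * c.2 := Nat.le_mul_of_pos_right h (by omega)
    omega
  have ha2e : a.2 = h - 1 := by rw [hc2, mul_zero] at hsum1; omega
  have hc'2 : c'.2 = 1 := by
    rcases Nat.lt_or_ge c'.2 1 with h0 | h1'
    · have hz : c'.2 = 0 := by omega
      rw [hz, mul_zero] at hsum2; omega
    · rcases Nat.lt_or_ge c'.2 2 with hlt | hge
      · omega
      · have : h * 2 ≤ h * c'.2 := Nat.mul_le_mul_left h hge
        omega
  have ha'2e : a'.2 = 0 := by rw [hc'2, mul_one] at hsum2; omega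
  -- from x-coordinates: a.1 = a'.1
  have hxeq : a.1 = a'.1 := by
    have h1 : a.1 + w * c.1 = a'.1 + w * c'.1 := by rw [← hp1e, ← hq1e, hx]
    have h2 : (a.1 + w * c.1) % w = (a'.1 + w * c'.1) % w := by rw [h1]
    rw [mul_comm w c.1, mul_comm w c'.1, Nat.add_mul_mod_self_right,
      Nat.add_mul_mod_self_right, Nat.mod_eq_of_lt ha1, Nat.mod_eq_of_lt ha'1] at h2
    exact h2
  refine ⟨a.1, ?_, ?_⟩
  · rw [hxeq]
    have : a' = (a'.1, 0) := by rw [← ha'2e]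
    rwa [this] at ha'G
  · have : a = (a.1, h - 1) := by rw [← ha2e]
    rwa [this] at haG
end

section
/- Let G be a generator with dimensions w_G, h_G and stages (X_i)_{i≥1}, and suppose the second stage X_2 is connected. Then there exists y ∈ ℕ such that both (0,y) ∈ G and (w_G−1,y) ∈ G; that is, the leftmost column and the rightmost column of G occupy a common row, so that a horizontal connection point between two horizontally adjacent copies exists. -/
lemma walk_exists_adj_ne {V : Type*} (Gr : SimpleGraph V) (f : V → ℕ) :
    ∀ {u v : V}, Gr.Walk u v → f u ≠ f v → ∃ x y, Gr.Adj x y ∧ f x ≠ f y := by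
  intro u v p
  induction p with
  | nil => intro hne; exact absurd rfl hne
  | @cons u m v hadj p ih =>
    intro hne
    by_cases hf : f u = f m
    · obtain ⟨x, y, hxy, h⟩ := ih (hf ▸ hne)
      exact ⟨x, y, hxy, h⟩
    · exact ⟨u, m, hadj, hf⟩

lemma dm_unique {w a b a' b' : ℕ} (hw : 0 < w) (ha : a < w) (ha' : a' < w)
    (heq : a + w * b = a' + w * b') : a = a' ∧ b = b' := by
  constructor
  · have := congrArg (· % w) heq
    simpa [Nat.add_mul_mod_self_left, Nat.mod_eq_of_lt ha, Nat.mod_eq_of_lt ha'] using this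
  · have := congrArg (· / w) heq
    simpa [Nat.add_mul_div_left _ _ hw, Nat.div_eq_of_lt ha, Nat.div_eq_of_lt ha'] using this

lemma cross_aux (G : Set (ℕ × ℕ)) (w h : ℕ) (hw1 : 1 < w) (hh0 : 0 < h)
    (hxlt : ∀ a ∈ G, a.1 < w) (hylt : ∀ a ∈ G, a.2 < h)
    (a c a' c' : ℕ × ℕ) (ha : a ∈ G) (ha' : a' ∈ G)
    (h1 : a.1 + w * c.1 + 1 = a'.1 + w * c'.1)
    (h2 : a.2 + h * c.2 = a'.2 + h * c'.2)
    (hne : c.1 ≠ c'.1) :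
    ∃ y : ℕ, (0, y) ∈ G ∧ (w - 1, y) ∈ G := by
  have hw0 : 0 < w := by omega
  have hya := hylt a ha
  have hya' := hylt a' ha'
  obtain ⟨hy, -⟩ := dm_unique hh0 hya hya' h2
  have hxa := hxlt a ha
  have hxa' := hxlt a' ha'
  -- show a.1 + 1 = w
  have ha1 : a.1 + 1 = w := by
    by_contra hlt
    have hlt' : a.1 + 1 < w := by omega
    have heq : (a.1 + 1) + w * c.1 = a'.1 + w * c'.1 := by omega
    exact hne (dm_unique hw0 hlt' hxa' heq).2
  have heq2 : 0 + w * (c.1 + 1) = a'.1 + w * c'.1 := by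
    rw [Nat.mul_add, Nat.mul_one]; omega
  have ha'0 : a'.1 = 0 := ((dm_unique hw0 hw0 hxa' heq2).1).symm
  refine ⟨a.2, ?_, ?_⟩
  · have : a' = (0, a.2) := by
      apply Prod.ext <;> simp [ha'0, hy.symm]
    rwa [this] at ha'
  · have : a = (w - 1, a.2) := by
      apply Prod.ext <;> simp [*] <;> omega
    rwa [this] at ha

/-- if stage 2 is connected then the leftmost and rightmost
columns of `G` occupy a common row. -/
theorem horizontal_connection_point (G : Set (ℕ × ℕ)) (hGen : IsGenerator G)
    (hconn : IsConnectedSet (stage G 2)) :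
    ∃ y : ℕ, (0, y) ∈ G ∧ (wG G - 1, y) ∈ G := by
  have hw1 : 1 < wG G := hGen.one_lt_w
  have hh1 : 1 < hG G := hGen.one_lt_h
  have hw0 : 0 < wG G := by omega
  have hh0 : 0 < hG G := by omega
  have hxlt : ∀ a ∈ G, a.1 < wG G := by
    intro a ha
    have : a.1 ≤ sSup ((fun p : ℕ × ℕ => p.1) '' G) :=
      le_csSup (hGen.finite.image _).bddAbove ⟨a, ha, rfl⟩
    unfold wG; omega
  have hylt : ∀ a ∈ G, a.2 < hG G := by
    intro a ha
    have : a.2 ≤ sSup ((fun p : ℕ × ℕ => p.2) '' G) :=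
      le_csSup (hGen.finite.image _).bddAbove ⟨a, ha, rfl⟩
    unfold hG; omega
  -- the sup is attained: there is b ∈ G with b.1 = wG G - 1
  have hne : ((fun p : ℕ × ℕ => p.1) '' G).Nonempty := ⟨0, ⟨(0, 0), hGen.zero_mem, rfl⟩⟩
  obtain ⟨b, hbG, hb1⟩ := hne.csSup_mem (hGen.finite.image _)
  have hbpos : b.1 ≠ 0 := by
    simp only [] at hb1; unfold wG at hw1; omega
  -- characterize stage 2
  have hstage : ∀ p : ℕ × ℕ, p ∈ stage G 2 ↔
      ∃ a ∈ G, ∃ c ∈ G, p = (a.1 + wG G * c.1, a.2 + hG G * c.2) := by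
    intro p
    show p ∈ stage G (0 + 2) ↔ _
    simp [stage, pow_one]
  -- two points of stage 2
  have hmem0 : ((0, 0) : ℕ × ℕ) ∈ stage G 2 := by
    rw [hstage]
    exact ⟨(0, 0), hGen.zero_mem, (0, 0), hGen.zero_mem, by simp⟩
  have hmem1 : ((wG G * b.1, hG G * b.2) : ℕ × ℕ) ∈ stage G 2 := by
    rw [hstage]
    exact ⟨(0, 0), hGen.zero_mem, b, hbG, by simp⟩
  -- the block function
  set f : (stage G 2) → ℕ := fun u => u.1.1 / wG G with hf
  have hf0 : f ⟨(0, 0), hmem0⟩ = 0 := by simp [hf]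
  have hf1 : f ⟨(wG G * b.1, hG G * b.2), hmem1⟩ = b.1 := by
    simp [hf, Nat.mul_div_cancel_left _ hw0]
  have hfne : f ⟨(0, 0), hmem0⟩ ≠ f ⟨(wG G * b.1, hG G * b.2), hmem1⟩ := by
    rw [hf0, hf1]; exact fun h => hbpos h.symm
  obtain ⟨x, y, hadj, hxy⟩ := (hconn.preconnected ⟨(0, 0), hmem0⟩
    ⟨(wG G * b.1, hG G * b.2), hmem1⟩).elim
    (fun wlk => walk_exists_adj_ne _ f wlk hfne)
  -- decompose x and y
  obtain ⟨a, haG, c, hcG, hxd⟩ := (hstage x.1).1 x.2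
  obtain ⟨a', ha'G, c', hc'G, hyd⟩ := (hstage y.1).1 y.2
  have hxq1 : x.1.1 = a.1 + wG G * c.1 := by rw [hxd]
  have hxq2 : x.1.2 = a.2 + hG G * c.2 := by rw [hxd]
  have hyq1 : y.1.1 = a'.1 + wG G * c'.1 := by rw [hyd]
  have hyq2 : y.1.2 = a'.2 + hG G * c'.2 := by rw [hyd]
  have hfx : f x = c.1 := by
    simp [hf, hxq1, Nat.add_mul_div_left _ _ hw0, Nat.div_eq_of_lt (hxlt a haG)]
  have hfy : f y = c'.1 := by
    simp [hf, hyq1, Nat.add_mul_div_left _ _ hw0, Nat.div_eq_of_lt (hxlt a' ha'G)]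
  have hcc : c.1 ≠ c'.1 := by rw [← hfx, ← hfy]; exact hxy
  rcases hadj with ⟨h1, -⟩ | ⟨h1, h2 | h2⟩
  · exact absurd (by show (↑x : ℕ × ℕ).1 / wG G = (↑y : ℕ × ℕ).1 / wG G; rw [h1]) hxy
  · exact cross_aux G (wG G) (hG G) hw1 hh0 hxlt hylt a c a' c' haG ha'G
      (by omega) (by omega) hcc
  · exact cross_aux G (wG G) (hG G) hw1 hh0 hxlt hylt a' c' a c ha'G haG
      (by omega) (by omega) hcc.symm
end

section
/- Let (X_i)_{i≥1} be the stages of the discrete self-similar fractal generated by the Sierpinski triangle generator G = {(0,0),(1,0),(0,1)}. Then for every i ≥ 1 the stage X_i is connected, i.e. the graph with vertex set X_i and an edge between any two points at Euclidean distance 1 is connected; hence the Sierpinski triangle is a connected discrete self-similar fractal. -/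
lemma wG_sierp : wG sierpGen = 2 := by
  have h : ((fun p : ℕ × ℕ => p.1) '' sierpGen) = {0, 1} := by
    ext x
    constructor
    · rintro ⟨p, hp, rfl⟩
      rcases hp with rfl | rfl | rfl <;> simp
    · rintro (rfl | rfl)
      · exact ⟨(0, 0), Or.inl rfl, rfl⟩
      · exact ⟨(1, 0), Or.inr (Or.inl rfl), rfl⟩
  rw [wG, h]
  rw [csSup_pair]
  rfl

lemma hG_sierp : hG sierpGen = 2 := by
  have h : ((fun p : ℕ × ℕ => p.2) '' sierpGen) = {0, 1} := by
    ext x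
    constructor
    · rintro ⟨p, hp, rfl⟩
      rcases hp with rfl | rfl | rfl <;> simp
    · rintro (rfl | rfl)
      · exact ⟨(0, 0), Or.inl rfl, rfl⟩
      · exact ⟨(0, 1), Or.inr (Or.inr rfl), rfl⟩
  rw [hG, h]
  rw [csSup_pair]
  rfl

lemma mem_stage_succ {p : ℕ × ℕ} {i : ℕ} :
    p ∈ stage sierpGen (i + 2) ↔
      ∃ a ∈ stage sierpGen (i + 1), ∃ b ∈ sierpGen,
        p = (a.1 + 2 ^ (i + 1) * b.1, a.2 + 2 ^ (i + 1) * b.2) := by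
  rw [show stage sierpGen (i + 2) = {p | ∃ a ∈ stage sierpGen (i + 1), ∃ b ∈ sierpGen,
      p = (a.1 + wG sierpGen ^ (i + 1) * b.1, a.2 + hG sierpGen ^ (i + 1) * b.2)} from rfl,
    wG_sierp, hG_sierp]
  rfl

lemma zero_mem_stage : ∀ i, (0, 0) ∈ stage sierpGen (i + 1) := by
  intro i
  induction i with
  | zero => exact Or.inl rfl
  | succ n ih =>
    rw [mem_stage_succ]
    exact ⟨(0, 0), ih, (0, 0), Or.inl rfl, by simp⟩

lemma cornerx_mem_stage : ∀ i, (2 ^ (i + 1) - 1, 0) ∈ stage sierpGen (i + 1) := by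
  intro i
  induction i with
  | zero => exact Or.inr (Or.inl rfl)
  | succ n ih =>
    rw [mem_stage_succ]
    refine ⟨(2 ^ (n + 1) - 1, 0), ih, (1, 0), Or.inr (Or.inl rfl), ?_⟩
    have h1 : 1 ≤ 2 ^ (n + 1) := Nat.one_le_two_pow
    have h2 : (2 : ℕ) ^ (n + 2) = 2 ^ (n + 1) + 2 ^ (n + 1) := by ring
    simp only [Prod.mk.injEq]
    omega

lemma cornery_mem_stage : ∀ i, (0, 2 ^ (i + 1) - 1) ∈ stage sierpGen (i + 1) := by
  intro i
  induction i with
  | zero => exact Or.inr (Or.inr rfl)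
  | succ n ih =>
    rw [mem_stage_succ]
    refine ⟨(0, 2 ^ (n + 1) - 1), ih, (0, 1), Or.inr (Or.inr rfl), ?_⟩
    have h1 : 1 ≤ 2 ^ (n + 1) := Nat.one_le_two_pow
    have h2 : (2 : ℕ) ^ (n + 2) = 2 ^ (n + 1) + 2 ^ (n + 1) := by ring
    simp only [Prod.mk.injEq]
    omega

/-- Translating a set preserves reachability in the grid graph. -/
lemma reach_map {S T : Set (ℕ × ℕ)} (v : ℕ × ℕ)
    (h : ∀ q ∈ S, ((q.1 + v.1, q.2 + v.2) : ℕ × ℕ) ∈ T)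
    {p q : ℕ × ℕ} (hp : p ∈ S) (hq : q ∈ S)
    (hr : (gridGraph S).Reachable ⟨p, hp⟩ ⟨q, hq⟩) :
    (gridGraph T).Reachable ⟨(p.1 + v.1, p.2 + v.2), h p hp⟩
      ⟨(q.1 + v.1, q.2 + v.2), h q hq⟩ := by
  let f : gridGraph S →g gridGraph T :=
    { toFun := fun x => ⟨(x.1.1 + v.1, x.1.2 + v.2), h x.1 x.2⟩
      map_rel' := by
        rintro ⟨x, hx⟩ ⟨y, hy⟩ hxy
        simp only [gridGraph, adjPt] at hxy ⊢
        omega }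
  exact hr.map f

lemma reach_root : ∀ i, ∀ p, ∀ hp : p ∈ stage sierpGen (i + 1),
    (gridGraph (stage sierpGen (i + 1))).Reachable
      ⟨(0, 0), zero_mem_stage i⟩ ⟨p, hp⟩ := by
  intro i
  induction i with
  | zero =>
    intro p hp
    rcases hp with rfl | rfl | rfl
    · rfl
    · exact SimpleGraph.Adj.reachable (Or.inr ⟨rfl, Or.inl rfl⟩)
    · exact SimpleGraph.Adj.reachable (Or.inl ⟨rfl, Or.inl rfl⟩)
  | succ n ih =>
    intro p hp
    -- inclusion of the base copy
    have hsub : ∀ q ∈ stage sierpGen (n + 1), q ∈ stage sierpGen (n + 2) := by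
      intro q hq
      rw [mem_stage_succ]
      exact ⟨q, hq, (0, 0), Or.inl rfl, by simp⟩
    have hsub' : ∀ q ∈ stage sierpGen (n + 1),
        ((q.1 + 0, q.2 + 0) : ℕ × ℕ) ∈ stage sierpGen (n + 2) := by
      intro q hq
      simpa using hsub q hq
    have h1 : 1 ≤ 2 ^ (n + 1) := Nat.one_le_two_pow
    -- reachability from root within the base copy
    have base_reach : ∀ q, ∀ hq : q ∈ stage sierpGen (n + 1),
        (gridGraph (stage sierpGen (n + 2))).Reachable
          ⟨(0, 0), zero_mem_stage (n + 1)⟩ ⟨q, hsub q hq⟩ := by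
      intro q hq
      have := reach_map (0, 0) hsub' (zero_mem_stage n) hq (ih q hq)
      have e1 : (⟨((0 : ℕ) + 0, (0 : ℕ) + 0), hsub' (0, 0) (zero_mem_stage n)⟩ :
          stage sierpGen (n + 2)) = ⟨(0, 0), zero_mem_stage (n + 1)⟩ := by
        exact Subtype.ext (by simp)
      have e2 : (⟨(q.1 + 0, q.2 + 0), hsub' q hq⟩ : stage sierpGen (n + 2)) =
          ⟨q, hsub q hq⟩ := Subtype.ext (by simp)
      rwa [e1, e2] at this
    rw [mem_stage_succ] at hp
    obtain ⟨a, ha, b, hb, rfl⟩ := hp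
    rcases hb with rfl | rfl | rfl
    · -- b = (0,0): point is in the base copy
      have e : ((a.1 + 2 ^ (n + 1) * (0:ℕ), a.2 + 2 ^ (n + 1) * (0:ℕ)) : ℕ × ℕ) = a := by
        simp
      have := base_reach a ha
      exact this.trans (by rw [show (⟨a, hsub a ha⟩ : stage sierpGen (n + 2)) =
        ⟨(a.1 + 2 ^ (n + 1) * 0, a.2 + 2 ^ (n + 1) * 0), by rw [e]; exact hsub a ha⟩ from
        Subtype.ext e.symm])
    · -- b = (1,0): point is in the right copy
      have hshift : ∀ q ∈ stage sierpGen (n + 1),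
          ((q.1 + 2 ^ (n + 1), q.2 + 0) : ℕ × ℕ) ∈ stage sierpGen (n + 2) := by
        intro q hq
        rw [mem_stage_succ]
        exact ⟨q, hq, (1, 0), Or.inr (Or.inl rfl), by simp⟩
      -- the corner of the base copy
      have hc := cornerx_mem_stage n
      -- bridge: corner (2^(n+1)-1, 0) adjacent to (2^(n+1), 0)
      have hb2 : ((2 ^ (n + 1) : ℕ), (0:ℕ)) ∈ stage sierpGen (n + 2) := by
        have := hshift (0, 0) (zero_mem_stage n)
        simpa using this
      have step1 : (gridGraph (stage sierpGen (n + 2))).Reachable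
          ⟨(0, 0), zero_mem_stage (n + 1)⟩ ⟨(2 ^ (n + 1) - 1, 0), hsub _ hc⟩ :=
        base_reach _ hc
      have step2 : (gridGraph (stage sierpGen (n + 2))).Adj
          ⟨(2 ^ (n + 1) - 1, 0), hsub _ hc⟩ ⟨(2 ^ (n + 1), 0), hb2⟩ := by
        show adjPt (2 ^ (n + 1) - 1, 0) (2 ^ (n + 1), 0)
        exact Or.inr ⟨rfl, Or.inl (by omega)⟩
      have step3 : (gridGraph (stage sierpGen (n + 2))).Reachable
          ⟨(2 ^ (n + 1), 0), hb2⟩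
          ⟨(a.1 + 2 ^ (n + 1) * 1, a.2 + 2 ^ (n + 1) * 0), by
            rw [mem_stage_succ]; exact ⟨a, ha, (1, 0), Or.inr (Or.inl rfl), rfl⟩⟩ := by
        have := reach_map ((2 ^ (n + 1) : ℕ), (0:ℕ)) hshift (zero_mem_stage n) ha
          (ih a ha)
        have e1 : (⟨((0:ℕ) + 2 ^ (n + 1), (0:ℕ) + 0), hshift (0,0) (zero_mem_stage n)⟩ :
            stage sierpGen (n + 2)) = ⟨(2 ^ (n + 1), 0), hb2⟩ := Subtype.ext (by simp)
        have e2 : (⟨(a.1 + 2 ^ (n + 1), a.2 + 0), hshift a ha⟩ :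
            stage sierpGen (n + 2)) = ⟨(a.1 + 2 ^ (n + 1) * 1, a.2 + 2 ^ (n + 1) * 0), by
              rw [mem_stage_succ]; exact ⟨a, ha, (1, 0), Or.inr (Or.inl rfl), rfl⟩⟩ :=
          Subtype.ext (by simp)
        rwa [e1, e2] at this
      exact (step1.trans step2.reachable).trans step3
    · -- b = (0,1): point is in the top copy
      have hshift : ∀ q ∈ stage sierpGen (n + 1),
          ((q.1 + 0, q.2 + 2 ^ (n + 1)) : ℕ × ℕ) ∈ stage sierpGen (n + 2) := by
        intro q hq
        rw [mem_stage_succ]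
        exact ⟨q, hq, (0, 1), Or.inr (Or.inr rfl), by simp⟩
      have hc := cornery_mem_stage n
      have hb2 : ((0:ℕ), (2 ^ (n + 1) : ℕ)) ∈ stage sierpGen (n + 2) := by
        have := hshift (0, 0) (zero_mem_stage n)
        simpa using this
      have step1 : (gridGraph (stage sierpGen (n + 2))).Reachable
          ⟨(0, 0), zero_mem_stage (n + 1)⟩ ⟨(0, 2 ^ (n + 1) - 1), hsub _ hc⟩ :=
        base_reach _ hc
      have step2 : (gridGraph (stage sierpGen (n + 2))).Adj
          ⟨(0, 2 ^ (n + 1) - 1), hsub _ hc⟩ ⟨(0, 2 ^ (n + 1)), hb2⟩ := by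
        show adjPt (0, 2 ^ (n + 1) - 1) (0, 2 ^ (n + 1))
        exact Or.inl ⟨rfl, Or.inl (by omega)⟩
      have step3 : (gridGraph (stage sierpGen (n + 2))).Reachable
          ⟨(0, 2 ^ (n + 1)), hb2⟩
          ⟨(a.1 + 2 ^ (n + 1) * 0, a.2 + 2 ^ (n + 1) * 1), by
            rw [mem_stage_succ]; exact ⟨a, ha, (0, 1), Or.inr (Or.inr rfl), rfl⟩⟩ := by
        have := reach_map ((0:ℕ), (2 ^ (n + 1) : ℕ)) hshift (zero_mem_stage n) ha
          (ih a ha)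
        have e1 : (⟨((0:ℕ) + 0, (0:ℕ) + 2 ^ (n + 1)), hshift (0,0) (zero_mem_stage n)⟩ :
            stage sierpGen (n + 2)) = ⟨(0, 2 ^ (n + 1)), hb2⟩ := Subtype.ext (by simp)
        have e2 : (⟨(a.1 + 0, a.2 + 2 ^ (n + 1)), hshift a ha⟩ :
            stage sierpGen (n + 2)) = ⟨(a.1 + 2 ^ (n + 1) * 0, a.2 + 2 ^ (n + 1) * 1), by
              rw [mem_stage_succ]; exact ⟨a, ha, (0, 1), Or.inr (Or.inr rfl), rfl⟩⟩ :=
          Subtype.ext (by simp)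
        rwa [e1, e2] at this
      exact (step1.trans step2.reachable).trans step3

/-- every stage of the Sierpinski triangle is connected, so
the Sierpinski triangle is a connected discrete self-similar fractal. -/
theorem sierpinski_stage_connected (i : ℕ) (hi : 1 ≤ i) :
    IsConnectedSet (stage sierpGen i) := by
  obtain ⟨n, rfl⟩ : ∃ n, i = n + 1 := ⟨i - 1, by omega⟩
  have : Nonempty (stage sierpGen (n + 1)) := ⟨⟨(0, 0), zero_mem_stage n⟩⟩
  exact ⟨fun x y => (reach_root n x.1 x.2).symm.trans (reach_root n y.1 y.2)⟩
end
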